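/- arXiv:2010.02541 — 2 statements merged into one kernel-verified Lean document; each statement's English description precedes it below -/
import Mathlib

section
/- Let $k\le n/10$ and let $\mathcal{K}$ be an $n$-uniform family. Suppose there is an $(n-k)$-element set $K$ such that every $F\in\mathcal{K}$ satisfies $|F\cap K|\ge n-2k$. Then either $c_{n-k}(\mathcal{K})\le 1$ or $|\bigcap_{F\in\mathcal{K}}F|\ge n-2k$. -/
open Finset

variable {α : Type*}

/-- `C` is a cover of the family `𝓕`: it intersects every member. -/
def IsCover [DecidableEq α] (C : Finset α) (𝓕 : Finset (Finset α)) : Prop :=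
  ∀ A ∈ 𝓕, (C ∩ A).Nonempty

/-- The family of all minimal covers of `𝓕` of size at most `n`. -/
noncomputable def minCovers [Fintype α] [DecidableEq α] (n : ℕ)
    (𝓕 : Finset (Finset α)) : Finset (Finset α) := by
  classical
  exact univ.filter (fun C => C.card ≤ n ∧ IsCover C 𝓕 ∧
    ∀ C' ⊆ C, IsCover C' 𝓕 → C' = C)

/-- `c_λ(𝓕) = ∑_{C ∈ 𝓒(𝓕)} λ^{-|C|}`. -/
noncomputable def covWeight [Fintype α] [DecidableEq α] (n : ℕ) (lam : ℝ)
    (𝓕 : Finset (Finset α)) : ℝ :=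
  ∑ C ∈ minCovers n 𝓕, lam ^ (-(C.card : ℤ))

/-- The covering number `τ(𝓕)`: minimum size of a cover. -/
noncomputable def covNum [DecidableEq α] (𝓕 : Finset (Finset α)) : ℕ :=
  sInf {k | ∃ C : Finset α, C.card = k ∧ IsCover C 𝓕}

section Aux
variable [Fintype α] [DecidableEq α]

lemma mem_minCovers {n : ℕ} {𝓕 : Finset (Finset α)} {C : Finset α} :
    C ∈ minCovers n 𝓕 ↔ C.card ≤ n ∧ IsCover C 𝓕 ∧ ∀ C' ⊆ C, IsCover C' 𝓕 → C' = C := by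
  classical
  simp [minCovers]

lemma covWeight_nonneg {n : ℕ} {lam : ℝ} (h : 0 ≤ lam) (𝓕 : Finset (Finset α)) :
    0 ≤ covWeight n lam 𝓕 :=
  Finset.sum_nonneg fun C _ => zpow_nonneg h _

lemma minCovers_empty (n : ℕ) : minCovers n (∅ : Finset (Finset α)) = {(∅ : Finset α)} := by
  ext C
  simp only [mem_minCovers, Finset.mem_singleton]
  constructor
  · rintro ⟨-, -, hmin⟩
    exact (hmin ∅ (Finset.empty_subset _) (fun A hA => absurd hA (Finset.notMem_empty _))).symm
  · rintro rfl
    refine ⟨by simp, fun A hA => absurd hA (Finset.notMem_empty _), fun C' hsub _ => ?_⟩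
    exact Finset.subset_empty.1 hsub

lemma minCovers_eq_empty_of_empty_mem {n : ℕ} {𝓤 : Finset (Finset α)}
    (h : (∅ : Finset α) ∈ 𝓤) : minCovers n 𝓤 = ∅ := by
  ext C
  simp only [mem_minCovers, Finset.notMem_empty, iff_false, not_and]
  intro _ hcov
  have := hcov ∅ h
  simp at this

/-- the common core of a family -/
def core (𝓤 : Finset (Finset α)) : Finset α := univ.filter fun a => ∀ U ∈ 𝓤, a ∈ U

lemma mem_core {𝓤 : Finset (Finset α)} {a : α} : a ∈ core 𝓤 ↔ ∀ U ∈ 𝓤, a ∈ U := by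
  simp [core]

lemma core_subset {𝓤 : Finset (Finset α)} {U₀ : Finset α} (h : U₀ ∈ 𝓤) : core 𝓤 ⊆ U₀ :=
  fun _ ha => (mem_core.1 ha) _ h

lemma inter_sdiff_of_inter_empty {C U Z : Finset α} (h : C ∩ Z = ∅) :
    C ∩ (U \ Z) = C ∩ U := by
  ext a
  simp only [Finset.mem_inter, Finset.mem_sdiff]
  have hz : a ∈ C → a ∉ Z := fun hc hz => by
    have : a ∈ C ∩ Z := Finset.mem_inter.2 ⟨hc, hz⟩
    simp [h] at this
  tauto

/-- Trace lemma : minimal covers of the traced family are the minimal covers avoiding `Z`. -/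
lemma minCovers_image_sdiff (n : ℕ) (𝓤 : Finset (Finset α)) (Z : Finset α) :
    minCovers n (𝓤.image fun U => U \ Z) = (minCovers n 𝓤).filter fun C => C ∩ Z = ∅ := by
  ext C
  simp only [Finset.mem_filter, mem_minCovers, IsCover, Finset.forall_mem_image]
  constructor
  · rintro ⟨hcard, hcov, hmin⟩
    have hCZ : C ∩ Z = ∅ := by
      have h1 : ∀ U ∈ 𝓤, ((C \ Z) ∩ (U \ Z)).Nonempty := by
        intro U hU
        have he : (C \ Z) ∩ (U \ Z) = C ∩ (U \ Z) := by
          ext a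
          simp only [Finset.mem_inter, Finset.mem_sdiff]
          tauto
        rw [he]
        exact hcov hU
      have h2 := hmin (C \ Z) Finset.sdiff_subset h1
      have : C \ Z = C := h2
      rw [← this]
      simp [Finset.sdiff_inter_self]
    refine ⟨⟨hcard, ?_, ?_⟩, hCZ⟩
    · intro U hU
      have := hcov hU
      rwa [inter_sdiff_of_inter_empty hCZ] at this
    · intro C' hsub hcov'
      have hC'Z : C' ∩ Z = ∅ := by
        have : C' ∩ Z ⊆ C ∩ Z := Finset.inter_subset_inter hsub le_rfl
        rw [hCZ] at this
        exact Finset.subset_empty.1 this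
      refine hmin C' hsub fun U hU => ?_
      rw [inter_sdiff_of_inter_empty hC'Z]
      exact hcov' U hU
  · rintro ⟨⟨hcard, hcov, hmin⟩, hCZ⟩
    refine ⟨hcard, ?_, ?_⟩
    · intro U hU
      rw [inter_sdiff_of_inter_empty hCZ]
      exact hcov U hU
    · intro C' hsub hcov'
      refine hmin C' hsub fun U hU => ?_
      have hC'Z : C' ∩ Z = ∅ := by
        have : C' ∩ Z ⊆ C ∩ Z := Finset.inter_subset_inter hsub le_rfl
        rw [hCZ] at this
        exact Finset.subset_empty.1 this
      have := hcov' hU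
      rwa [inter_sdiff_of_inter_empty hC'Z] at this

lemma covWeight_image_sdiff (n : ℕ) (lam : ℝ) (𝓤 : Finset (Finset α)) (Z : Finset α) :
    covWeight n lam (𝓤.image fun U => U \ Z)
      = ∑ C ∈ (minCovers n 𝓤).filter (fun C => C ∩ Z = ∅), lam ^ (-(C.card : ℤ)) := by
  rw [covWeight, minCovers_image_sdiff]


lemma singleton_mem_minCovers {n : ℕ} {𝓤 : Finset (Finset α)} (hn : 1 ≤ n)
    (hne : 𝓤.Nonempty) {x : α} (hx : ∀ U ∈ 𝓤, x ∈ U) :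
    ({x} : Finset α) ∈ minCovers n 𝓤 := by
  rw [mem_minCovers]
  refine ⟨by simpa using hn, fun U hU => ⟨x, by simp [hx U hU]⟩, fun C' hsub hcov => ?_⟩
  rcases Finset.subset_singleton_iff.1 hsub with rfl | rfl
  · obtain ⟨U, hU⟩ := hne
    have := hcov U hU
    simp at this
  · rfl

lemma minCover_eq_singleton {n : ℕ} {𝓤 : Finset (Finset α)} {C : Finset α}
    (hC : C ∈ minCovers n 𝓤) {x : α} (hxC : x ∈ C) (hx : ∀ U ∈ 𝓤, x ∈ U) :
    C = {x} := by
  obtain ⟨-, -, hmin⟩ := mem_minCovers.1 hC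
  exact (hmin {x} (by simpa using hxC) (fun U hU => ⟨x, by simp [hx U hU]⟩)).symm

/-- Case A : if `x` is in every member, the minimal covers meeting `{x}` are exactly `{x}`. -/
lemma filter_core_mem_eq {n : ℕ} {𝓤 : Finset (Finset α)} (hn : 1 ≤ n)
    (hne : 𝓤.Nonempty) {x : α} (hx : ∀ U ∈ 𝓤, x ∈ U) :
    (minCovers n 𝓤).filter (fun C => ¬ (C ∩ ({x} : Finset α) = ∅)) = {({x} : Finset α)} := by
  ext C
  simp only [Finset.mem_filter, Finset.mem_singleton]
  constructor
  · rintro ⟨hC, hne'⟩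
    obtain ⟨a, ha⟩ := Finset.nonempty_iff_ne_empty.2 hne'
    obtain ⟨haC, hax⟩ := Finset.mem_inter.1 ha
    rw [Finset.mem_singleton] at hax
    subst hax
    exact minCover_eq_singleton hC haC hx
  · rintro rfl
    refine ⟨singleton_mem_minCovers hn hne hx, ?_⟩
    simp [Finset.eq_empty_iff_forall_notMem]

/-- The minimal covers meeting a common-core set `S` are the singletons of `S`. -/
lemma filter_core_eq {n : ℕ} {𝓚 : Finset (Finset α)} (hn : 1 ≤ n)
    (hne : 𝓚.Nonempty) {S : Finset α} (hS : ∀ x ∈ S, ∀ U ∈ 𝓚, x ∈ U) :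
    (minCovers n 𝓚).filter (fun C => ¬ (C ∩ S = ∅)) = S.image (fun x => ({x} : Finset α)) := by
  ext C
  simp only [Finset.mem_filter, Finset.mem_image]
  constructor
  · rintro ⟨hC, hne'⟩
    obtain ⟨a, ha⟩ := Finset.nonempty_iff_ne_empty.2 hne'
    obtain ⟨haC, haS⟩ := Finset.mem_inter.1 ha
    exact ⟨a, haS, (minCover_eq_singleton hC haC (hS a haS)).symm⟩
  · rintro ⟨a, haS, rfl⟩
    refine ⟨singleton_mem_minCovers hn hne (hS a haS), ?_⟩
    rw [Finset.eq_empty_iff_forall_notMem]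
    push_neg
    exact ⟨a, by simp [haS]⟩

/-- Case B : bounding the weight of minimal covers through `x` by the weight of
the minimal covers of the subfamily avoiding `x`. -/
lemma sum_through_le {n : ℕ} {L : ℝ} (hL : 0 < L) (𝓤 : Finset (Finset α)) (x : α) :
    ∑ C ∈ (minCovers n 𝓤).filter (fun C => ¬ (C ∩ ({x} : Finset α) = ∅)),
        L ^ (-(C.card : ℤ))
      ≤ L⁻¹ * covWeight n L (𝓤.filter fun U => x ∉ U) := by
  classical
  set 𝓥 := 𝓤.filter fun U => x ∉ U with h𝓥
  set T := (minCovers n 𝓤).filter (fun C => ¬ (C ∩ ({x} : Finset α) = ∅)) with hT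
  have hxmem : ∀ C ∈ T, x ∈ C := by
    intro C hC
    obtain ⟨-, hne'⟩ := Finset.mem_filter.1 hC
    obtain ⟨a, ha⟩ := Finset.nonempty_iff_ne_empty.2 hne'
    obtain ⟨haC, hax⟩ := Finset.mem_inter.1 ha
    rw [Finset.mem_singleton] at hax
    subst hax; exact haC
  have hmap : ∀ C ∈ T, C.erase x ∈ minCovers n 𝓥 := by
    intro C hC
    have hxC := hxmem C hC
    obtain ⟨hCmc, -⟩ := Finset.mem_filter.1 hC
    obtain ⟨hcard, hcov, hmin⟩ := mem_minCovers.1 hCmc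
    rw [mem_minCovers]
    refine ⟨le_trans (Finset.card_le_card (Finset.erase_subset _ _)) hcard, ?_, ?_⟩
    · intro U hU
      obtain ⟨hU𝓤, hxU⟩ := Finset.mem_filter.1 hU
      obtain ⟨y, hy⟩ := hcov U hU𝓤
      obtain ⟨hyC, hyU⟩ := Finset.mem_inter.1 hy
      refine ⟨y, Finset.mem_inter.2 ⟨Finset.mem_erase.2 ⟨?_, hyC⟩, hyU⟩⟩
      rintro rfl; exact hxU hyU
    · intro D hsub hcovD
      have hxD : x ∉ D := fun hxD => (Finset.mem_erase.1 (hsub hxD)).1 rfl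
      have h1 : insert x D ⊆ C := by
        intro a ha
        rcases Finset.mem_insert.1 ha with rfl | ha
        · exact hxC
        · exact Finset.erase_subset _ _ (hsub ha)
      have h2 : IsCover (insert x D) 𝓤 := by
        intro U hU
        by_cases hxU : x ∈ U
        · exact ⟨x, Finset.mem_inter.2 ⟨Finset.mem_insert_self _ _, hxU⟩⟩
        · obtain ⟨y, hy⟩ := hcovD U (Finset.mem_filter.2 ⟨hU, hxU⟩)
          obtain ⟨hyD, hyU⟩ := Finset.mem_inter.1 hy
          exact ⟨y, Finset.mem_inter.2 ⟨Finset.mem_insert_of_mem hyD, hyU⟩⟩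
      have h3 := hmin (insert x D) h1 h2
      calc D = (insert x D).erase x := by rw [Finset.erase_insert hxD]
      _ = C.erase x := by rw [h3]
  have hinj : ∀ C₁ ∈ T, ∀ C₂ ∈ T, C₁.erase x = C₂.erase x → C₁ = C₂ := by
    intro C₁ h₁ C₂ h₂ he
    have := congrArg (insert x) he
    rwa [Finset.insert_erase (hxmem C₁ h₁), Finset.insert_erase (hxmem C₂ h₂)] at this
  have hstep : ∀ C ∈ T, L ^ (-(C.card : ℤ)) = L⁻¹ * L ^ (-((C.erase x).card : ℤ)) := by
    intro C hC
    have hxC := hxmem C hC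
    have hcard : (C.erase x).card + 1 = C.card := by
      rw [Finset.card_erase_of_mem hxC]
      have : 1 ≤ C.card := Finset.card_pos.2 ⟨x, hxC⟩
      omega
    have hLne : L ≠ 0 := ne_of_gt hL
    rw [← hcard]
    push_cast
    rw [neg_add, zpow_add₀ hLne, zpow_neg_one]
    ring
  calc ∑ C ∈ T, L ^ (-(C.card : ℤ))
      = ∑ C ∈ T, L⁻¹ * L ^ (-((C.erase x).card : ℤ)) := Finset.sum_congr rfl hstep
    _ = L⁻¹ * ∑ C ∈ T, L ^ (-((C.erase x).card : ℤ)) := by rw [Finset.mul_sum]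
    _ ≤ L⁻¹ * covWeight n L 𝓥 := by
        refine mul_le_mul_of_nonneg_left ?_ (inv_nonneg.2 hL.le)
        rw [covWeight]
        calc ∑ C ∈ T, L ^ (-((C.erase x).card : ℤ))
            = ∑ D ∈ T.image (fun C => C.erase x), L ^ (-(D.card : ℤ)) := by
              rw [Finset.sum_image hinj]
          _ ≤ ∑ D ∈ minCovers n 𝓥, L ^ (-(D.card : ℤ)) := by
              refine Finset.sum_le_sum_of_subset_of_nonneg ?_ (fun D _ _ => zpow_nonneg hL.le _)
              intro D hD
              obtain ⟨C, hC, rfl⟩ := Finset.mem_image.1 hD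
              exact hmap C hC

lemma core_image_sdiff_singleton {𝓤 : Finset (Finset α)} (hne : 𝓤.Nonempty) (x : α) :
    core (𝓤.image (fun U => U \ ({x} : Finset α))) = (core 𝓤).erase x := by
  ext a
  simp only [mem_core, Finset.forall_mem_image, Finset.mem_erase, Finset.mem_sdiff,
    Finset.mem_singleton]
  constructor
  · intro h
    obtain ⟨U, hU⟩ := hne
    exact ⟨(h hU).2, fun V hV => (h hV).1⟩
  · rintro ⟨hax, h⟩ U hU
    exact ⟨h U hU, hax⟩

end Aux

/-- The ledger function `Led r v t = ∑_{j<t} min(v, r+j)`. -/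
def Led (r v t : ℕ) : ℕ := ∑ j ∈ Finset.range t, min v (r + j)

lemma Led_succ (r v t : ℕ) : Led r v (t + 1) = Led r v t + min v (r + t) := by
  simp [Led, Finset.sum_range_succ]

lemma Led_mono_left {v v' : ℕ} (r t : ℕ) (h : v ≤ v') : Led r v t ≤ Led r v' t :=
  Finset.sum_le_sum fun j _ => le_min (min_le_left _ _ |>.trans h) (min_le_right _ _)

lemma Led_mono_right {t t' : ℕ} (r v : ℕ) (h : t ≤ t') : Led r v t ≤ Led r v t' :=
  Finset.sum_le_sum_of_subset (Finset.range_subset_range.2 h)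

lemma Led_le_crude (r v t : ℕ) : 2 * Led r v t ≤ 2 * r * t + t * (t - 1) := by
  have h1 : Led r v t ≤ ∑ j ∈ Finset.range t, (r + j) :=
    Finset.sum_le_sum fun j _ => min_le_right _ _
  have h2 : ∑ j ∈ Finset.range t, (r + j) = r * t + ∑ j ∈ Finset.range t, j := by
    rw [Finset.sum_add_distrib, Finset.sum_const, Finset.card_range, smul_eq_mul, Nat.mul_comm]
  have h3 : (∑ j ∈ Finset.range t, j) * 2 = t * (t - 1) := Finset.sum_range_id_mul_two t
  have h4 : 2 * Led r v t ≤ 2 * (r * t + ∑ j ∈ Finset.range t, j) := by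
    rw [← h2]; omega
  calc 2 * Led r v t ≤ 2 * (r * t) + (∑ j ∈ Finset.range t, j) * 2 := by omega
  _ = 2 * r * t + t * (t-1) := by rw [h3]; ring_nf

section P7sec
variable [Fintype α] [DecidableEq α]

theorem P7 (n L r M₀ : ℕ) (hn : 1 ≤ n) (hL : 1 ≤ L)
    (hdag : ∀ u v : ℕ, u ≤ v → v ≤ M₀ → Led r v u ≤ L * v) :
    ∀ a : ℕ, ∀ b : ℕ, ∀ 𝓤 : Finset (Finset α), 𝓤.card ≤ a → ∀ U₀ ∈ 𝓤, U₀.card ≤ b →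
    ∀ M : ℕ, M ≤ M₀ → (∀ U ∈ 𝓤, U.card ≤ M) →
    (∀ U ∈ 𝓤, ∀ U' ∈ 𝓤, (U \ U').card ≤ r) →
    covWeight n (L : ℝ) 𝓤 * (L : ℝ) ^ 2 ≤
      ((L * (core 𝓤).card
        + Led r (M - (core 𝓤).card) (U₀.card - (core 𝓤).card) : ℕ) : ℝ) := by
  have hLpos : (0 : ℝ) < (L : ℝ) := by exact_mod_cast hL
  have hLne : (L : ℝ) ≠ 0 := ne_of_gt hLpos
  intro a
  induction a using Nat.strong_induction_on with
  | _ a iha =>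
  intro b
  induction b with
  | zero =>
    intro 𝓤 hUa U₀ hU₀ hU₀b M hMM₀ hsize hdev
    have hU₀e : U₀ = ∅ := Finset.card_eq_zero.1 (Nat.le_zero.1 hU₀b)
    subst hU₀e
    have h0 : covWeight n (L : ℝ) 𝓤 = 0 := by
      rw [covWeight, minCovers_eq_empty_of_empty_mem hU₀, Finset.sum_empty]
    rw [h0, zero_mul]
    exact_mod_cast Nat.zero_le _
  | succ b ihb =>
    intro 𝓤 hUa U₀ hU₀ hU₀b M hMM₀ hsize hdev
    by_cases hU₀e : U₀.card = 0
    · have hU₀e' : U₀ = ∅ := Finset.card_eq_zero.1 hU₀e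
      subst hU₀e'
      have h0 : covWeight n (L : ℝ) 𝓤 = 0 := by
        rw [covWeight, minCovers_eq_empty_of_empty_mem hU₀, Finset.sum_empty]
      rw [h0, zero_mul]
      exact_mod_cast Nat.zero_le _
    · have ht1 : 1 ≤ U₀.card := Nat.one_le_iff_ne_zero.2 hU₀e
      have hiU₀ : core 𝓤 ⊆ U₀ := core_subset hU₀
      have hit : (core 𝓤).card ≤ U₀.card := Finset.card_le_card hiU₀
      have htM : U₀.card ≤ M := hsize U₀ hU₀
      have hne𝓤 : 𝓤.Nonempty := ⟨U₀, hU₀⟩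
      by_cases hcore : (core 𝓤).Nonempty
      · -- CASE A
        obtain ⟨x, hx⟩ := hcore
        have hxall : ∀ U ∈ 𝓤, x ∈ U := mem_core.1 hx
        have hxU₀ : x ∈ U₀ := hxall U₀ hU₀
        set 𝓤' := 𝓤.image (fun U => U \ ({x} : Finset α)) with h𝓤'
        -- split the weight
        have hsplit := Finset.sum_filter_add_sum_filter_not (minCovers n 𝓤)
          (fun C => C ∩ ({x} : Finset α) = ∅) (fun C => (L : ℝ) ^ (-(C.card : ℤ)))
        have hpart1 : ∑ C ∈ (minCovers n 𝓤).filter (fun C => ¬ (C ∩ ({x} : Finset α) = ∅)),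
            (L : ℝ) ^ (-(C.card : ℤ)) = (L : ℝ)⁻¹ := by
          rw [filter_core_mem_eq hn hne𝓤 hxall, Finset.sum_singleton]
          simp
        have hpart2 : ∑ C ∈ (minCovers n 𝓤).filter (fun C => C ∩ ({x} : Finset α) = ∅),
            (L : ℝ) ^ (-(C.card : ℤ)) = covWeight n (L : ℝ) 𝓤' := by
          rw [covWeight_image_sdiff]
        have hcw : covWeight n (L : ℝ) 𝓤 = covWeight n (L : ℝ) 𝓤' + (L : ℝ)⁻¹ := by
          rw [covWeight, ← hsplit, hpart1, hpart2]
        -- IH on 𝓤'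
        have hU₀' : U₀ \ ({x} : Finset α) ∈ 𝓤' := Finset.mem_image_of_mem _ hU₀
        have hcardU₀' : (U₀ \ ({x} : Finset α)).card = U₀.card - 1 := by
          rw [Finset.card_sdiff_of_subset (Finset.singleton_subset_iff.2 hxU₀), Finset.card_singleton]
        have hsize' : ∀ V ∈ 𝓤', V.card ≤ M - 1 := by
          intro V hV
          obtain ⟨U, hU, rfl⟩ := Finset.mem_image.1 hV
          rw [Finset.card_sdiff_of_subset (Finset.singleton_subset_iff.2 (hxall U hU)),
            Finset.card_singleton]
          have := hsize U hU
          omega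
        have hdev' : ∀ V ∈ 𝓤', ∀ V' ∈ 𝓤', (V \ V').card ≤ r := by
          intro V hV V' hV'
          obtain ⟨U, hU, rfl⟩ := Finset.mem_image.1 hV
          obtain ⟨U', hU', rfl⟩ := Finset.mem_image.1 hV'
          refine le_trans (Finset.card_le_card ?_) (hdev U hU U' hU')
          intro a ha
          simp only [Finset.mem_sdiff, Finset.mem_singleton] at ha ⊢
          tauto
        have hcore' : core 𝓤' = (core 𝓤).erase x := core_image_sdiff_singleton hne𝓤 x
        have hi' : (core 𝓤').card = (core 𝓤).card - 1 := by
          rw [hcore', Finset.card_erase_of_mem hx]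
        have hIH := ihb 𝓤' (le_trans Finset.card_image_le hUa) (U₀ \ ({x} : Finset α)) hU₀'
          (by omega) (M - 1) (by omega) hsize' hdev'
        rw [hi', hcardU₀'] at hIH
        have hi1 : 1 ≤ (core 𝓤).card := Finset.card_pos.2 ⟨x, hx⟩
        -- ℕ arithmetic
        have hsub1 : M - 1 - ((core 𝓤).card - 1) = M - (core 𝓤).card := by omega
        have hsub2 : U₀.card - 1 - ((core 𝓤).card - 1) = U₀.card - (core 𝓤).card := by omega
        rw [hsub1, hsub2] at hIH
        have hnat : L + (L * ((core 𝓤).card - 1)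
            + Led r (M - (core 𝓤).card) (U₀.card - (core 𝓤).card))
            = L * (core 𝓤).card + Led r (M - (core 𝓤).card) (U₀.card - (core 𝓤).card) := by
          have h2 : (core 𝓤).card - 1 + 1 = (core 𝓤).card := by omega
          calc L + (L * ((core 𝓤).card - 1)
              + Led r (M - (core 𝓤).card) (U₀.card - (core 𝓤).card))
              = L * (((core 𝓤).card - 1) + 1)
                + Led r (M - (core 𝓤).card) (U₀.card - (core 𝓤).card) := by ring_nf
            _ = _ := by rw [h2]
        have hinv : (L : ℝ)⁻¹ * (L : ℝ) ^ 2 = (L : ℝ) := by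
          field_simp
        calc covWeight n (L : ℝ) 𝓤 * (L : ℝ) ^ 2
            = covWeight n (L : ℝ) 𝓤' * (L : ℝ) ^ 2 + (L : ℝ)⁻¹ * (L : ℝ) ^ 2 := by
              rw [hcw]; ring
          _ ≤ ((L * ((core 𝓤).card - 1)
                + Led r (M - (core 𝓤).card) (U₀.card - (core 𝓤).card) : ℕ) : ℝ)
                + (L : ℝ) := by rw [hinv]; linarith [hIH]
          _ = ((L + (L * ((core 𝓤).card - 1)
                + Led r (M - (core 𝓤).card) (U₀.card - (core 𝓤).card)) : ℕ) : ℝ) := by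
              push_cast; ring
          _ = _ := by rw [hnat]
      · -- CASE B
        have hcoreE : core 𝓤 = ∅ := Finset.not_nonempty_iff_eq_empty.1 hcore
        have hi0 : (core 𝓤).card = 0 := by rw [hcoreE]; rfl
        obtain ⟨x, hxU₀⟩ := Finset.card_pos.1 ht1
        have hxnot : ∃ U ∈ 𝓤, x ∉ U := by
          by_contra h
          push_neg at h
          have : x ∈ core 𝓤 := mem_core.2 h
          rw [hcoreE] at this
          exact absurd this (Finset.notMem_empty _)
        set 𝓥 := 𝓤.filter (fun U => x ∉ U) with h𝓥
        have hVne : 𝓥.Nonempty := by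
          obtain ⟨U, hU, hxU⟩ := hxnot
          exact ⟨U, Finset.mem_filter.2 ⟨hU, hxU⟩⟩
        obtain ⟨Us, hUs⟩ := hVne
        set Ms := min M (r + (U₀.card - 1)) with hMs
        have hVsize : ∀ U' ∈ 𝓥, U'.card ≤ Ms := by
          intro U' hU'
          obtain ⟨hU'𝓤, hxU'⟩ := Finset.mem_filter.1 hU'
          have h1 : U'.card ≤ M := hsize _ hU'𝓤
          have h2 : (U' \ U₀).card ≤ r := hdev _ hU'𝓤 _ hU₀
          have h3 : (U' ∩ U₀) ⊆ U₀.erase x := by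
            intro a ha
            obtain ⟨haU', haU₀⟩ := Finset.mem_inter.1 ha
            refine Finset.mem_erase.2 ⟨?_, haU₀⟩
            rintro rfl; exact hxU' haU'
          have h4 : (U' ∩ U₀).card ≤ U₀.card - 1 := by
            refine le_trans (Finset.card_le_card h3) ?_
            rw [Finset.card_erase_of_mem hxU₀]
          have h5 : (U' \ U₀).card + (U' ∩ U₀).card = U'.card :=
            Finset.card_sdiff_add_card_inter U' U₀
          omega
        have hVdev : ∀ U' ∈ 𝓥, ∀ U'' ∈ 𝓥, (U' \ U'').card ≤ r := by
          intro U' hU' U'' hU''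
          exact hdev _ (Finset.filter_subset _ _ hU') _ (Finset.filter_subset _ _ hU'')
        have hVlt : 𝓥.card < a := by
          have hss : 𝓥 ⊂ 𝓤 := by
            refine Finset.ssubset_iff_of_subset (Finset.filter_subset _ _) |>.2 ?_
            exact ⟨U₀, hU₀, fun hU₀V => (Finset.mem_filter.1 hU₀V).2 hxU₀⟩
          exact lt_of_lt_of_le (Finset.card_lt_card hss) hUa
        have hIHV := iha 𝓥.card hVlt Us.card 𝓥 le_rfl Us hUs le_rfl Ms
          (le_trans (min_le_left _ _) hMM₀) hVsize hVdev
        -- bound the 𝓥-weight by L * Ms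
        have hiV : (core 𝓥).card ≤ Us.card := Finset.card_le_card (core_subset hUs)
        have htsMs : Us.card ≤ Ms := hVsize Us hUs
        have hled : Led r (Ms - (core 𝓥).card) (Us.card - (core 𝓥).card)
            ≤ L * (Ms - (core 𝓥).card) := by
          refine hdag _ _ (by omega) (by omega)
        have hnatV : L * (core 𝓥).card + L * (Ms - (core 𝓥).card) = L * Ms := by
          rw [← Nat.mul_add]
          congr 1
          omega
        have hcwV : covWeight n (L : ℝ) 𝓥 * (L : ℝ) ^ 2 ≤ ((L * Ms : ℕ) : ℝ) := by
          refine le_trans hIHV ?_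
          have : (L * (core 𝓥).card
              + Led r (Ms - (core 𝓥).card) (Us.card - (core 𝓥).card) : ℕ)
              ≤ L * Ms := by omega
          exact_mod_cast this
        have hcwV' : covWeight n (L : ℝ) 𝓥 * (L : ℝ) ≤ ((Ms : ℕ) : ℝ) := by
          have h2 : covWeight n (L : ℝ) 𝓥 * (L : ℝ) * (L : ℝ) ≤ ((Ms : ℕ) : ℝ) * (L : ℝ) := by
            have : covWeight n (L : ℝ) 𝓥 * (L : ℝ) * (L : ℝ)
                = covWeight n (L : ℝ) 𝓥 * (L : ℝ) ^ 2 := by ring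
            rw [this]
            refine le_trans hcwV (le_of_eq ?_)
            push_cast
            ring
          exact le_of_mul_le_mul_right h2 hLpos
        -- main trace family
        set 𝓤'' := 𝓤.image (fun U => U \ ({x} : Finset α)) with h𝓤''
        have hsplit := Finset.sum_filter_add_sum_filter_not (minCovers n 𝓤)
          (fun C => C ∩ ({x} : Finset α) = ∅) (fun C => (L : ℝ) ^ (-(C.card : ℤ)))
        have hpart2 : ∑ C ∈ (minCovers n 𝓤).filter (fun C => C ∩ ({x} : Finset α) = ∅),
            (L : ℝ) ^ (-(C.card : ℤ)) = covWeight n (L : ℝ) 𝓤'' := by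
          rw [covWeight_image_sdiff]
        have hpart1 : ∑ C ∈ (minCovers n 𝓤).filter (fun C => ¬ (C ∩ ({x} : Finset α) = ∅)),
            (L : ℝ) ^ (-(C.card : ℤ)) ≤ (L : ℝ)⁻¹ * covWeight n (L : ℝ) 𝓥 :=
          sum_through_le hLpos 𝓤 x
        -- IH on 𝓤''
        have hU₀' : U₀ \ ({x} : Finset α) ∈ 𝓤'' := Finset.mem_image_of_mem _ hU₀
        have hcardU₀' : (U₀ \ ({x} : Finset α)).card = U₀.card - 1 := by
          rw [Finset.card_sdiff_of_subset (Finset.singleton_subset_iff.2 hxU₀), Finset.card_singleton]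
        have hsize'' : ∀ V ∈ 𝓤'', V.card ≤ M := by
          intro V hV
          obtain ⟨U, hU, rfl⟩ := Finset.mem_image.1 hV
          exact le_trans (Finset.card_le_card Finset.sdiff_subset) (hsize U hU)
        have hdev'' : ∀ V ∈ 𝓤'', ∀ V' ∈ 𝓤'', (V \ V').card ≤ r := by
          intro V hV V' hV'
          obtain ⟨U, hU, rfl⟩ := Finset.mem_image.1 hV
          obtain ⟨U', hU', rfl⟩ := Finset.mem_image.1 hV'
          refine le_trans (Finset.card_le_card ?_) (hdev U hU U' hU')
          intro a ha
          simp only [Finset.mem_sdiff, Finset.mem_singleton] at ha ⊢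
          tauto
        have hcore'' : core 𝓤'' = ∅ := by
          rw [core_image_sdiff_singleton hne𝓤 x, hcoreE]
          rfl
        have hIH := ihb 𝓤'' (le_trans Finset.card_image_le hUa) (U₀ \ ({x} : Finset α)) hU₀'
          (by omega) M hMM₀ hsize'' hdev''
        rw [hcore''] at hIH
        simp only [Finset.card_empty, Nat.sub_zero, Nat.mul_zero, Nat.zero_add] at hIH
        rw [hcardU₀'] at hIH
        -- assemble
        have hcw : covWeight n (L : ℝ) 𝓤
            = covWeight n (L : ℝ) 𝓤''
              + ∑ C ∈ (minCovers n 𝓤).filter (fun C => ¬ (C ∩ ({x} : Finset α) = ∅)),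
                  (L : ℝ) ^ (-(C.card : ℤ)) := by
          rw [covWeight, ← hsplit, hpart2]
        have hinv : (L : ℝ)⁻¹ * (L : ℝ) ^ 2 = (L : ℝ) := by
          field_simp
        have hledstep : Led r M (U₀.card - 1) + min M (r + (U₀.card - 1)) = Led r M U₀.card := by
          have h1 : U₀.card - 1 + 1 = U₀.card := by omega
          rw [← Led_succ, h1]
        rw [hi0]
        simp only [Nat.sub_zero, Nat.mul_zero, Nat.zero_add]
        have hthrough : (∑ C ∈ (minCovers n 𝓤).filter (fun C => ¬ (C ∩ ({x} : Finset α) = ∅)),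
            (L : ℝ) ^ (-(C.card : ℤ))) * (L : ℝ) ^ 2 ≤ ((Ms : ℕ) : ℝ) := by
          calc (∑ C ∈ (minCovers n 𝓤).filter (fun C => ¬ (C ∩ ({x} : Finset α) = ∅)),
              (L : ℝ) ^ (-(C.card : ℤ))) * (L : ℝ) ^ 2
              ≤ ((L : ℝ)⁻¹ * covWeight n (L : ℝ) 𝓥) * (L : ℝ) ^ 2 := by
                have h0 : (0 : ℝ) < (L : ℝ) ^ 2 := by positivity
                exact mul_le_mul_of_nonneg_right hpart1 h0.le
            _ = (covWeight n (L : ℝ) 𝓥 * (L : ℝ)) := by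
                field_simp
            _ ≤ ((Ms : ℕ) : ℝ) := hcwV'
        have hfin : ((Led r M (U₀.card - 1) : ℕ) : ℝ) + ((Ms : ℕ) : ℝ)
            = ((Led r M U₀.card : ℕ) : ℝ) := by
          rw [← hledstep]
          push_cast [hMs]
          ring
        calc covWeight n (L : ℝ) 𝓤 * (L : ℝ) ^ 2
            = covWeight n (L : ℝ) 𝓤'' * (L : ℝ) ^ 2
              + (∑ C ∈ (minCovers n 𝓤).filter (fun C => ¬ (C ∩ ({x} : Finset α) = ∅)),
                  (L : ℝ) ^ (-(C.card : ℤ))) * (L : ℝ) ^ 2 := by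
              rw [hcw]; ring
          _ ≤ ((Led r M (U₀.card - 1) : ℕ) : ℝ) + ((Ms : ℕ) : ℝ) := by
              exact add_le_add hIH hthrough
          _ = _ := hfin
end P7sec

section Arith

lemma arith_hdag {n k : ℕ} (hk1 : 1 ≤ k) (h10 : 10 * k ≤ n) {m : ℕ} (hmn : m ≤ n) :
    ∀ u v : ℕ, u ≤ v → v ≤ m → Led (3 * k) v u ≤ (n - k) * v := by
  intro u v huv hvm
  have h1 : Led (3 * k) v u ≤ Led (3 * k) v v := Led_mono_right _ _ huv
  have h2 : 2 * Led (3 * k) v v ≤ 2 * (3 * k) * v + v * (v - 1) := Led_le_crude _ _ _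
  have h3 : v * (v - 1) ≤ v * (n - 1) := Nat.mul_le_mul_left _ (by omega)
  have h4 : 2 * (3 * k) * v + v * (n - 1) ≤ 2 * ((n - k) * v) := by
    have h5 : 2 * (3 * k) * v + v * (n - 1) = v * (6 * k + (n - 1)) := by ring
    have h6 : 2 * ((n - k) * v) = v * (2 * (n - k)) := by ring
    rw [h5, h6]
    exact Nat.mul_le_mul_left _ (by omega)
  omega

lemma arith_final {n k s m : ℕ} (hk1 : 1 ≤ k) (h10 : 10 * k ≤ n)
    (hsm : s + m = n) (hm1 : 2 * k + 1 ≤ m) :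
    (s : ℝ) * ((n - k : ℕ) : ℝ) + ((Led (3 * k) m m : ℕ) : ℝ) ≤ (((n - k : ℕ) : ℝ)) ^ 2 := by
  have hkn : k ≤ n := by omega
  have hcrude : 2 * Led (3 * k) m m ≤ 2 * (3 * k) * m + m * (m - 1) := Led_le_crude _ _ _
  have hm1' : 1 ≤ m := by omega
  have hLcast : ((n - k : ℕ) : ℝ) = (n : ℝ) - (k : ℝ) := by
    push_cast [Nat.cast_sub hkn]
    ring
  have hscast : (s : ℝ) = (n : ℝ) - (m : ℝ) := by
    have : (s : ℝ) + (m : ℝ) = (n : ℝ) := by exact_mod_cast congrArg (Nat.cast : ℕ → ℝ) hsm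
    linarith
  have hcrude' : 2 * ((Led (3 * k) m m : ℕ) : ℝ)
      ≤ 6 * (k : ℝ) * (m : ℝ) + (m : ℝ) * ((m : ℝ) - 1) := by
    have h1 : ((2 * Led (3 * k) m m : ℕ) : ℝ) ≤ ((2 * (3 * k) * m + m * (m - 1) : ℕ) : ℝ) := by
      exact_mod_cast hcrude
    push_cast [Nat.cast_sub hm1'] at h1
    linarith
  have h10' : 10 * (k : ℝ) ≤ (n : ℝ) := by exact_mod_cast h10
  have hk1' : 1 ≤ (k : ℝ) := by exact_mod_cast hk1
  have hm' : 2 * (k : ℝ) + 1 ≤ (m : ℝ) := by exact_mod_cast hm1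
  have hmn' : (m : ℝ) ≤ (n : ℝ) := by
    have : m ≤ n := by omega
    exact_mod_cast this
  rw [hLcast, hscast]
  nlinarith [mul_nonneg (by linarith : (0:ℝ) ≤ (m : ℝ) - (2 * (k:ℝ) + 1))
      (by linarith : (0:ℝ) ≤ (n : ℝ) - (m : ℝ)),
    mul_nonneg (by positivity : (0:ℝ) ≤ (m : ℝ))
      (by linarith : (0:ℝ) ≤ (n : ℝ) - 10 * (k : ℝ)),
    sq_nonneg ((n : ℝ) - (m : ℝ))]

end Arith

section Main
variable [Fintype α] [DecidableEq α]

lemma dev_le_3k {n k : ℕ} {𝓚 : Finset (Finset α)} {K : Finset α}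
    (hunif : ∀ F ∈ 𝓚, F.card = n) (hK : K.card = n - k)
    (hint : ∀ F ∈ 𝓚, n - 2 * k ≤ (F ∩ K).card) (h10 : 10 * k ≤ n)
    {F F' : Finset α} (hF : F ∈ 𝓚) (hF' : F' ∈ 𝓚) : (F \ F').card ≤ 3 * k := by
  have h1 := hint F hF
  have h2 := hint F' hF'
  have hu : ((F ∩ K) ∪ (F' ∩ K)).card ≤ n - k := by
    rw [← hK]
    refine Finset.card_le_card ?_
    intro a ha
    rcases Finset.mem_union.1 ha with h | h
    · exact (Finset.mem_inter.1 h).2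
    · exact (Finset.mem_inter.1 h).2
  have hie : ((F ∩ K) ∩ (F' ∩ K)).card + ((F ∩ K) ∪ (F' ∩ K)).card
      = (F ∩ K).card + (F' ∩ K).card := Finset.card_inter_add_card_union _ _
  have hsub : (F ∩ K) ∩ (F' ∩ K) ⊆ F ∩ F' := by
    intro a ha
    simp only [Finset.mem_inter] at ha ⊢
    tauto
  have h3 : ((F ∩ K) ∩ (F' ∩ K)).card ≤ (F ∩ F').card := Finset.card_le_card hsub
  have h4 : (F \ F').card + (F ∩ F').card = F.card := Finset.card_sdiff_add_card_inter F F'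
  have hFn : F.card = n := hunif F hF
  omega

end Main

theorem stmt5 [Fintype α] [DecidableEq α] (n k : ℕ) (hk : (k : ℝ) ≤ (n : ℝ) / 10)
    (𝓚 : Finset (Finset α)) (hunif : ∀ F ∈ 𝓚, F.card = n)
    (K : Finset α) (hK : K.card = n - k)
    (hint : ∀ F ∈ 𝓚, n - 2 * k ≤ (F ∩ K).card) :
    covWeight n ((n : ℝ) - k) 𝓚 ≤ 1 ∨
      n - 2 * k ≤ (univ.filter (fun x => ∀ F ∈ 𝓚, x ∈ F)).card := by
  classical
  have h10 : 10 * k ≤ n := by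
    have : 10 * (k : ℝ) ≤ (n : ℝ) := by linarith
    exact_mod_cast this
  -- the empty-family case
  by_cases h𝓚e : 𝓚 = ∅
  · subst h𝓚e
    left
    rw [covWeight, minCovers_empty, Finset.sum_singleton]
    simp
  have hne𝓚 : 𝓚.Nonempty := Finset.nonempty_iff_ne_empty.2 h𝓚e
  -- the k = 0 case
  by_cases hk0 : k = 0
  · subst hk0
    right
    have hFK : ∀ F ∈ 𝓚, F = K := by
      intro F hF
      have h1 : n - 2 * 0 ≤ (F ∩ K).card := hint F hF
      have h2 : (F ∩ K) ⊆ F := Finset.inter_subset_left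
      have hFn : F.card = n := hunif F hF
      have h3 : F ∩ K = F := Finset.eq_of_subset_of_card_le h2 (by omega)
      have h4 : F ⊆ K := by
        rw [← h3]
        exact Finset.inter_subset_right
      refine Finset.eq_of_subset_of_card_le h4 ?_
      omega
    have hKsub : K ⊆ univ.filter (fun x => ∀ F ∈ 𝓚, x ∈ F) := by
      intro x hx
      refine Finset.mem_filter.2 ⟨Finset.mem_univ _, fun F hF => ?_⟩
      rw [hFK F hF]
      exact hx
    have := Finset.card_le_card hKsub
    omega
  have hk1 : 1 ≤ k := Nat.one_le_iff_ne_zero.2 hk0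
  have hn1 : 1 ≤ n := by omega
  have hkn : k ≤ n := by omega
  set L : ℕ := n - k with hLdef
  have hL1 : 1 ≤ L := by omega
  have hlam : ((n : ℝ) - (k : ℝ)) = (L : ℝ) := by
    rw [hLdef]
    push_cast [Nat.cast_sub hkn]
    ring
  have hLpos : (0 : ℝ) < (L : ℝ) := by exact_mod_cast hL1
  -- the core
  by_cases hs : n - 2 * k ≤ (core 𝓚).card
  · right
    exact hs
  left
  push_neg at hs
  set s : ℕ := (core 𝓚).card with hsdef
  have hScoresub : ∀ F ∈ 𝓚, core 𝓚 ⊆ F := fun F hF => core_subset hF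
  obtain ⟨F₀, hF₀⟩ := Finset.nonempty_iff_ne_empty.2 h𝓚e
  have hsn : s ≤ n := by
    have h1 : s ≤ F₀.card := Finset.card_le_card (hScoresub F₀ hF₀)
    rw [hunif F₀ hF₀] at h1
    exact h1
  set m : ℕ := n - s with hmdef
  have hsm : s + m = n := by omega
  have hm2k : 2 * k + 1 ≤ m := by omega
  have hmn : m ≤ n := by omega
  set 𝓛 := 𝓚.image (fun F => F \ core 𝓚) with h𝓛
  have hLsize : ∀ V ∈ 𝓛, V.card = m := by
    intro V hV
    obtain ⟨F, hF, rfl⟩ := Finset.mem_image.1 hV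
    rw [Finset.card_sdiff_of_subset (hScoresub F hF), hunif F hF]
  have hLdev : ∀ V ∈ 𝓛, ∀ V' ∈ 𝓛, (V \ V').card ≤ 3 * k := by
    intro V hV V' hV'
    obtain ⟨F, hF, rfl⟩ := Finset.mem_image.1 hV
    obtain ⟨F', hF', rfl⟩ := Finset.mem_image.1 hV'
    refine le_trans (Finset.card_le_card ?_) (dev_le_3k hunif hK hint h10 hF hF')
    intro a ha
    simp only [Finset.mem_sdiff] at ha ⊢
    have haS : a ∉ core 𝓚 := ha.1.2
    exact ⟨ha.1.1, fun haF' => ha.2 ⟨haF', haS⟩⟩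
  have hcoreL : core 𝓛 = ∅ := by
    rw [Finset.eq_empty_iff_forall_notMem]
    intro a ha
    have h1 : ∀ V ∈ 𝓛, a ∈ V := mem_core.1 ha
    have h2 : ∀ F ∈ 𝓚, a ∈ F := by
      intro F hF
      have := h1 _ (Finset.mem_image_of_mem _ hF)
      exact (Finset.mem_sdiff.1 this).1
    have h3 : a ∈ core 𝓚 := mem_core.2 h2
    have h4 := h1 _ (Finset.mem_image_of_mem _ hF₀)
    exact (Finset.mem_sdiff.1 h4).2 h3
  -- split the weight
  have hsplit := Finset.sum_filter_add_sum_filter_not (minCovers n 𝓚)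
    (fun C => C ∩ core 𝓚 = ∅) (fun C => (L : ℝ) ^ (-(C.card : ℤ)))
  have hpart1 : ∑ C ∈ (minCovers n 𝓚).filter (fun C => ¬ (C ∩ core 𝓚 = ∅)),
      (L : ℝ) ^ (-(C.card : ℤ)) = (s : ℝ) * (L : ℝ)⁻¹ := by
    rw [filter_core_eq hn1 hne𝓚 (fun x hx => mem_core.1 hx)]
    rw [Finset.sum_image (fun a _ b _ h => Finset.singleton_inj.1 h)]
    simp [Finset.sum_const, hsdef]
  have hpart2 : ∑ C ∈ (minCovers n 𝓚).filter (fun C => C ∩ core 𝓚 = ∅),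
      (L : ℝ) ^ (-(C.card : ℤ)) = covWeight n (L : ℝ) 𝓛 := by
    rw [covWeight_image_sdiff]
  have hcw : covWeight n (L : ℝ) 𝓚 = covWeight n (L : ℝ) 𝓛 + (s : ℝ) * (L : ℝ)⁻¹ := by
    rw [covWeight, ← hsplit, hpart1, hpart2]
  -- apply the main bound to 𝓛
  have hL₀ : F₀ \ core 𝓚 ∈ 𝓛 := Finset.mem_image_of_mem _ hF₀
  have hL₀card : (F₀ \ core 𝓚).card = m := hLsize _ hL₀
  have hdagtop := arith_hdag hk1 h10 hmn
  have hP7 := P7 n L (3 * k) m hn1 hL1 (by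
      intro u v huv hvm
      exact hdagtop u v huv hvm)
    𝓛.card (F₀ \ core 𝓚).card 𝓛 le_rfl (F₀ \ core 𝓚) hL₀ le_rfl m le_rfl
    (fun V hV => le_of_eq (hLsize V hV)) hLdev
  rw [hcoreL] at hP7
  simp only [Finset.card_empty, Nat.sub_zero, Nat.mul_zero, Nat.zero_add] at hP7
  rw [hL₀card] at hP7
  -- final arithmetic
  have hkey := arith_final (n := n) (k := k) hk1 h10 hsm hm2k
  rw [hlam]
  have hL2pos : (0 : ℝ) < (L : ℝ) ^ 2 := by positivity
  have hmain : covWeight n (L : ℝ) 𝓚 * (L : ℝ) ^ 2 ≤ 1 * (L : ℝ) ^ 2 := by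
    rw [hcw]
    have hinv : (s : ℝ) * (L : ℝ)⁻¹ * (L : ℝ) ^ 2 = (s : ℝ) * (L : ℝ) := by
      field_simp
    calc (covWeight n (L : ℝ) 𝓛 + (s : ℝ) * (L : ℝ)⁻¹) * (L : ℝ) ^ 2
        = covWeight n (L : ℝ) 𝓛 * (L : ℝ) ^ 2 + (s : ℝ) * (L : ℝ)⁻¹ * (L : ℝ) ^ 2 := by ring
      _ ≤ ((Led (3 * k) m m : ℕ) : ℝ) + (s : ℝ) * (L : ℝ) := by
          rw [hinv]
          linarith [hP7]
      _ ≤ (L : ℝ) ^ 2 := by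
          have := hkey
          rw [← hLdef] at this
          linarith
      _ = 1 * (L : ℝ) ^ 2 := by ring
  exact le_of_mul_le_mul_right hmain hL2pos
end

section
/- Let $n\ge 1$, $m,t\ge 1$, and let $\mathcal{A}$ be an $n$-uniform family with $|\mathcal{A}|\le e^m$ and $\tau(\mathcal{A})\ge t$. Then for every $l\ge 1$ there exists a subfamily $\mathcal{A}'\subseteq\mathcal{A}$ with $\tau(\mathcal{A}\setminus\mathcal{A}')\le t/2$ such that for every $i=1,\dots,l$, $\mathbb{E}_{A_1,\dots,A_i\in\mathcal{A}'}|A_1\cap\dots\cap A_i|\le C_l\,(m/t)^{i-1}\,n$, where $C_l$ is a constant depending only on $l$ with $C_l=O(2^{l^2})$, and the expectation is over uniform independent choices of $A_1,\dots,A_i$ from $\mathcal{A}'$. -/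
open Finset

variable {α : Type*}

lemma covNum_le' {β : Type} [DecidableEq β] (𝓕 : Finset (Finset β)) (C : Finset β)
    (h : IsCover C 𝓕) : covNum 𝓕 ≤ C.card :=
  Nat.sInf_le ⟨C, rfl, h⟩


lemma greedy {β : Type} [DecidableEq β] (θ : ℝ) (hθ0 : 0 < θ) (hθ1 : θ < 1) :
    ∀ N : ℕ, ∀ 𝓐 : Finset (Finset β), 𝓐.card ≤ N →
    ∃ 𝓑 ⊆ 𝓐, ∃ C : Finset β,
      (∀ A ∈ 𝓐, A ∉ 𝓑 → (C ∩ A).Nonempty) ∧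
      (∀ x : β, ((𝓑.filter (fun A => x ∈ A)).card : ℝ) ≤ θ * 𝓑.card) ∧
      (C = ∅ ∨ (1:ℝ) ≤ (1-θ)^(C.card - 1) * 𝓐.card) := by
  classical
  intro N
  induction N with
  | zero =>
    intro 𝓐 hcard
    have h𝓐 : 𝓐 = ∅ := card_eq_zero.mp (Nat.le_zero.mp hcard)
    refine ⟨∅, by simp, ∅, ?_, ?_, Or.inl rfl⟩
    · simp [h𝓐]
    · intro x; simp
  | succ N ih =>
    intro 𝓐 hcard
    by_cases hall : ∀ x : β, ((𝓐.filter (fun A => x ∈ A)).card : ℝ) ≤ θ * 𝓐.card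
    · exact ⟨𝓐, Subset.rfl, ∅, fun A hA hA' => absurd hA hA', hall, Or.inl rfl⟩
    · push_neg at hall
      obtain ⟨x, hx⟩ := hall
      set d := (𝓐.filter (fun A => x ∈ A)).card with hd
      have hdpos : 0 < d := by
        by_contra h
        push_neg at h
        have hd0 : d = 0 := Nat.le_zero.mp h
        rw [hd0] at hx
        have : (0:ℝ) ≤ θ * 𝓐.card := mul_nonneg hθ0.le (Nat.cast_nonneg _)
        push_cast at hx
        linarith
      have h𝓐pos : 0 < 𝓐.card := lt_of_lt_of_le hdpos (card_filter_le _ _)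
      set 𝓐₁ := 𝓐.filter (fun A => x ∉ A) with h𝓐₁
      have hsplit : (𝓐.filter (fun A => x ∈ A)).card + 𝓐₁.card = 𝓐.card :=
        card_filter_add_card_filter_not _
      have h𝓐₁le : 𝓐₁.card ≤ N := by omega
      obtain ⟨𝓑, h𝓑sub, C₁, hcov₁, hdeg₁, hinv₁⟩ := ih 𝓐₁ h𝓐₁le
      refine ⟨𝓑, h𝓑sub.trans (filter_subset _ _), insert x C₁, ?_, hdeg₁, Or.inr ?_⟩
      · intro A hA hAB
        by_cases hxA : x ∈ A
        · exact ⟨x, mem_inter.mpr ⟨mem_insert_self _ _, hxA⟩⟩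
        · obtain ⟨y, hy⟩ := hcov₁ A (mem_filter.mpr ⟨hA, hxA⟩) hAB
          rw [mem_inter] at hy
          exact ⟨y, mem_inter.mpr ⟨mem_insert_of_mem hy.1, hy.2⟩⟩
      · have h1θ : (0:ℝ) < 1 - θ := by linarith
        have key : (1:ℝ) ≤ (1-θ)^(C₁.card) * 𝓐.card := by
          by_cases hC₁ : C₁ = ∅
          · rw [hC₁]
            simp only [card_empty, pow_zero, one_mul]
            exact_mod_cast h𝓐pos
          · have hC₁pos : 0 < C₁.card := card_pos.mpr (nonempty_iff_ne_empty.mpr hC₁)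
            have hinv₁' : (1:ℝ) ≤ (1-θ)^(C₁.card - 1) * 𝓐₁.card := hinv₁.resolve_left hC₁
            have h𝓐₁bd : (𝓐₁.card : ℝ) ≤ (1-θ) * 𝓐.card := by
              have heq : (𝓐₁.card : ℝ) = (𝓐.card : ℝ) - d := by
                push_cast [← hsplit]; ring
              rw [heq]
              nlinarith [hx]
            calc (1:ℝ) ≤ (1-θ)^(C₁.card - 1) * 𝓐₁.card := hinv₁'
              _ ≤ (1-θ)^(C₁.card - 1) * ((1-θ) * 𝓐.card) :=
                  mul_le_mul_of_nonneg_left h𝓐₁bd (pow_nonneg h1θ.le _)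
              _ = (1-θ)^(C₁.card - 1 + 1) * 𝓐.card := by rw [pow_succ]; ring
              _ = (1-θ)^(C₁.card) * 𝓐.card := by
                  congr 2
                  omega
        calc (1:ℝ) ≤ (1-θ)^(C₁.card) * 𝓐.card := key
          _ ≤ (1-θ)^((insert x C₁).card - 1) * 𝓐.card := by
              apply mul_le_mul_of_nonneg_right _ (Nat.cast_nonneg _)
              apply pow_le_pow_of_le_one h1θ.le (by linarith)
              have := card_insert_le x C₁
              omega

lemma exp_bound {β : Type} [Fintype β] [DecidableEq β] (𝓑 : Finset (Finset β)) (n : ℕ) (θ : ℝ)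
    (hθ : 0 ≤ θ)
    (hn : ∀ A ∈ 𝓑, A.card = n)
    (hdeg : ∀ x : β, ((𝓑.filter (fun A => x ∈ A)).card : ℝ) ≤ θ * 𝓑.card)
    (i : ℕ) (hi : 1 ≤ i) :
    (∑ v ∈ Fintype.piFinset (fun _ : Fin i => 𝓑),
        ((Finset.univ.filter (fun x => ∀ j, x ∈ v j)).card : ℝ))
      ≤ θ^(i-1) * n * (𝓑.card:ℝ)^i := by
  classical
  have swap : (∑ v ∈ Fintype.piFinset (fun _ : Fin i => 𝓑),
      ((Finset.univ.filter (fun x => ∀ j, x ∈ v j)).card : ℝ))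
      = ∑ x : β, ((𝓑.filter (fun A => x ∈ A)).card : ℝ)^i := by
    have h1 : ∀ v : Fin i → Finset β,
        ((Finset.univ.filter (fun x => ∀ j, x ∈ v j)).card : ℝ)
        = ∑ x : β, if (∀ j, x ∈ v j) then (1:ℝ) else 0 := by
      intro v
      rw [Finset.card_filter]
      push_cast
      rfl
    simp_rw [h1]
    rw [Finset.sum_comm]
    congr 1
    funext x
    have h2 : (∑ v ∈ Fintype.piFinset (fun _ : Fin i => 𝓑),
        if (∀ j, x ∈ v j) then (1:ℝ) else 0)
        = (((Fintype.piFinset (fun _ : Fin i => 𝓑)).filter (fun v => ∀ j, x ∈ v j)).card : ℝ) := by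
      rw [Finset.card_filter]
      push_cast
      rfl
    rw [h2]
    have h3 : (Fintype.piFinset (fun _ : Fin i => 𝓑)).filter (fun v => ∀ j, x ∈ v j)
        = Fintype.piFinset (fun _ : Fin i => 𝓑.filter (fun A => x ∈ A)) := by
      ext v
      simp [Fintype.mem_piFinset, forall_and]
    rw [h3, Fintype.card_piFinset]
    push_cast
    rw [Finset.prod_const, Finset.card_univ, Fintype.card_fin]
  rw [swap]
  have hdegsum : (∑ x : β, ((𝓑.filter (fun A => x ∈ A)).card : ℝ)) = (n : ℝ) * 𝓑.card := by
    have : (∑ x : β, ((𝓑.filter (fun A => x ∈ A)).card : ℝ))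
        = ∑ x : β, ∑ A ∈ 𝓑, if x ∈ A then (1:ℝ) else 0 := by
      congr 1; funext x
      rw [Finset.card_filter]; push_cast; rfl
    rw [this, Finset.sum_comm]
    have h4 : ∀ A ∈ 𝓑, (∑ x : β, if x ∈ A then (1:ℝ) else 0) = (n : ℝ) := by
      intro A hA
      have : (∑ x : β, if x ∈ A then (1:ℝ) else 0)
          = ((Finset.univ.filter (fun x => x ∈ A)).card : ℝ) := by
        rw [Finset.card_filter]; push_cast; rfl
      rw [this, Finset.filter_mem_eq_inter, Finset.univ_inter, hn A hA]
    rw [Finset.sum_congr rfl h4, Finset.sum_const, nsmul_eq_mul]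
    ring
  calc (∑ x : β, ((𝓑.filter (fun A => x ∈ A)).card : ℝ)^i)
      ≤ ∑ x : β, (θ * 𝓑.card)^(i-1) * ((𝓑.filter (fun A => x ∈ A)).card : ℝ) := by
        apply Finset.sum_le_sum
        intro x _
        have hx := hdeg x
        have hx0 : (0:ℝ) ≤ ((𝓑.filter (fun A => x ∈ A)).card : ℝ) := Nat.cast_nonneg _
        calc ((𝓑.filter (fun A => x ∈ A)).card : ℝ)^i
            = ((𝓑.filter (fun A => x ∈ A)).card : ℝ)^(i-1)
              * ((𝓑.filter (fun A => x ∈ A)).card : ℝ) := by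
              rw [← pow_succ]
              congr 1
              omega
          _ ≤ (θ * 𝓑.card)^(i-1) * ((𝓑.filter (fun A => x ∈ A)).card : ℝ) := by
              apply mul_le_mul_of_nonneg_right (pow_le_pow_left₀ hx0 hx _) hx0
    _ = (θ * 𝓑.card)^(i-1) * ((n:ℝ) * 𝓑.card) := by
        rw [← Finset.mul_sum, hdegsum]
    _ = θ^(i-1) * n * (𝓑.card:ℝ)^i := by
        rw [mul_pow]
        have : ((𝓑.card:ℝ))^(i-1) * (𝓑.card:ℝ) = (𝓑.card:ℝ)^i := by
          rw [← pow_succ]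
          congr 1
          omega
        rw [← this]
        ring

theorem stmt12 : ∃ K : ℝ, 0 < K ∧ ∀ l : ℕ, 1 ≤ l →
    ∃ Cl : ℝ, 0 < Cl ∧ Cl ≤ K * 2 ^ (l ^ 2) ∧
    ∀ (β : Type) (_ : Fintype β) (_ : DecidableEq β) (n : ℕ) (m t : ℝ),
      1 ≤ n → 1 ≤ m → 1 ≤ t →
      ∀ 𝓐 : Finset (Finset β), (∀ A ∈ 𝓐, A.card = n) → (𝓐.card : ℝ) ≤ Real.exp m →
      t ≤ (covNum 𝓐 : ℝ) →
      ∃ 𝓐' ⊆ 𝓐, (covNum (𝓐 \ 𝓐') : ℝ) ≤ t / 2 ∧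
        ∀ i : ℕ, 1 ≤ i → i ≤ l →
          (∑ v ∈ Fintype.piFinset (fun _ : Fin i => 𝓐'),
              ((Finset.univ.filter (fun x => ∀ j, x ∈ v j)).card : ℝ)) / (𝓐'.card : ℝ) ^ i ≤
            Cl * (m / t) ^ (i - 1) * n := by
  refine ⟨1, one_pos, ?_⟩
  intro l hl
  refine ⟨(4:ℝ)^(l-1), by positivity, ?_, ?_⟩
  · rw [one_mul]
    have h4 : (4:ℝ)^(l-1) = 2^(2*(l-1)) := by rw [pow_mul]; norm_num
    rw [h4]
    apply pow_le_pow_right₀ (by norm_num : (1:ℝ) ≤ 2)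
    obtain ⟨k, rfl⟩ := Nat.exists_eq_add_of_le hl
    simp only [Nat.add_sub_cancel_left]
    nlinarith
  · intro β _ _ n m t hn hm ht 𝓐 hunif hcardA hτ
    classical
    have htpos : (0:ℝ) < t := by linarith
    have hmpos : (0:ℝ) < m := by linarith
    set θ := 4*m/t with hθdef
    have hθpos : 0 < θ := by positivity
    -- Step 1: obtain 𝓑 ⊆ 𝓐 with degree bound and a small cover of 𝓐 \ 𝓑
    obtain ⟨𝓑, h𝓑sub, hcovbd, hdeg⟩ :
        ∃ 𝓑 ⊆ 𝓐, ((covNum (𝓐 \ 𝓑) : ℝ) ≤ t / 2) ∧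
          (∀ x : β, ((𝓑.filter (fun A => x ∈ A)).card : ℝ) ≤ θ * 𝓑.card) := by
      by_cases hθ1 : θ < 1
      · obtain ⟨𝓑, h𝓑sub, C, hcov, hdeg, hinv⟩ := greedy θ hθpos hθ1 𝓐.card 𝓐 le_rfl
        have hiscov : IsCover C (𝓐 \ 𝓑) := by
          intro A hA
          rw [mem_sdiff] at hA
          exact hcov A hA.1 hA.2
        have hcnum := covNum_le' (𝓐 \ 𝓑) C hiscov
        refine ⟨𝓑, h𝓑sub, ?_, hdeg⟩
        have hCbd : (C.card : ℝ) ≤ t / 2 := by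
          rcases hinv with hC | hinv
          · rw [hC]; simp; linarith
          · -- quantitative bound on C.card
            have h1θ : (0:ℝ) < 1 - θ := by linarith
            have ht4 : 4 < t := by
              have : 4*m < t := by
                rw [hθdef] at hθ1
                calc 4*m = (4*m/t)*t := by field_simp
                  _ < 1*t := by apply mul_lt_mul_of_pos_right hθ1 htpos
                  _ = t := one_mul t
              linarith
            by_cases hC : C = ∅
            · rw [hC]; simp; linarith
            · have hC1 : 1 ≤ C.card := card_pos.mpr (nonempty_iff_ne_empty.mpr hC)
              set k := C.card - 1 with hk
              have hkey : (1:ℝ) ≤ (1-θ)^k * Real.exp m := by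
                calc (1:ℝ) ≤ (1-θ)^k * 𝓐.card := hinv
                  _ ≤ (1-θ)^k * Real.exp m :=
                    mul_le_mul_of_nonneg_left hcardA (pow_nonneg h1θ.le _)
              have hlog0 : (0:ℝ) ≤ (k:ℝ) * Real.log (1-θ) + m := by
                have h := Real.log_nonneg hkey
                rwa [Real.log_mul (pow_ne_zero _ (ne_of_gt h1θ)) (Real.exp_ne_zero m),
                  Real.log_pow, Real.log_exp] at h
              have hlogθ : Real.log (1-θ) ≤ -θ := by
                have := Real.log_le_sub_one_of_pos h1θ
                linarith
              have hkθ : (k:ℝ) * θ ≤ m := by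
                have h1 : (k:ℝ) * Real.log (1-θ) ≤ (k:ℝ) * (-θ) :=
                  mul_le_mul_of_nonneg_left hlogθ (Nat.cast_nonneg _)
                linarith
              have hkbd : (k:ℝ) ≤ t / 4 := by
                rw [le_div_iff₀ (by norm_num : (0:ℝ) < 4)]
                have h2 : (k:ℝ) ≤ m / θ := (le_div_iff₀ hθpos).mpr hkθ
                have h3 : m / θ = t / 4 := by
                  rw [hθdef]; field_simp
                rw [h3] at h2
                linarith [(le_div_iff₀ (by norm_num : (0:ℝ) < 4)).mp h2]
              have hcast : ((C.card : ℝ)) = (k:ℝ) + 1 := by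
                rw [hk]
                push_cast [Nat.cast_sub hC1]
                ring
              rw [hcast]
              linarith
        calc ((covNum (𝓐 \ 𝓑) : ℝ)) ≤ (C.card : ℝ) := by exact_mod_cast hcnum
          _ ≤ t / 2 := hCbd
      · push_neg at hθ1
        refine ⟨𝓐, Subset.rfl, ?_, ?_⟩
        · rw [sdiff_self, bot_eq_empty]
          have h0 : covNum (∅ : Finset (Finset β)) ≤ (∅ : Finset β).card :=
            covNum_le' _ ∅ (by intro A hA; simp at hA)
          simp only [card_empty, Nat.le_zero] at h0
          rw [h0]
          push_cast
          linarith
        · intro x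
          calc ((𝓐.filter (fun A => x ∈ A)).card : ℝ) ≤ (𝓐.card : ℝ) := by
                exact_mod_cast card_filter_le _ _
            _ = 1 * (𝓐.card : ℝ) := (one_mul _).symm
            _ ≤ θ * (𝓐.card : ℝ) := mul_le_mul_of_nonneg_right hθ1 (Nat.cast_nonneg _)
    -- Step 2: conclude the expectation bounds
    refine ⟨𝓑, h𝓑sub, hcovbd, ?_⟩
    intro i hi hil
    have hRHS : (0:ℝ) ≤ (4:ℝ)^(l-1) * (m / t) ^ (i - 1) * n := by positivity
    rcases eq_empty_or_nonempty 𝓑 with h𝓑 | h𝓑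
    · subst h𝓑
      have hpi : Fintype.piFinset (fun _ : Fin i => (∅ : Finset (Finset β))) = ∅ := by
        apply eq_empty_of_forall_notMem
        intro v hv
        have := Fintype.mem_piFinset.mp hv ⟨0, hi⟩
        simp at this
      rw [hpi]
      simp [hRHS]
    · have h𝓑pos : (0:ℝ) < (𝓑.card : ℝ) := by exact_mod_cast card_pos.mpr h𝓑
      rw [div_le_iff₀ (pow_pos h𝓑pos i)]
      have hbound := exp_bound 𝓑 n θ hθpos.le (fun A hA => hunif A (h𝓑sub hA)) hdeg i hi
      refine hbound.trans ?_
      have hθeq : θ^(i-1) = 4^(i-1) * (m/t)^(i-1) := by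
        rw [← mul_pow, hθdef]
        congr 1
        field_simp
      rw [hθeq]
      have h4le : (4:ℝ)^(i-1) ≤ (4:ℝ)^(l-1) :=
        pow_le_pow_right₀ (by norm_num) (by omega)
      have hmt : (0:ℝ) ≤ (m/t)^(i-1) := by positivity
      apply mul_le_mul_of_nonneg_right _ (pow_nonneg h𝓑pos.le i)
      apply mul_le_mul_of_nonneg_right _ (Nat.cast_nonneg n)
      exact mul_le_mul_of_nonneg_right h4le hmt
end
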